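/- Let v : [0,T] × Ω → ℝ and suppose for some α ∈ (0,1] and C > 0 that for all t < t+h ≤ T and all bounded paths x: |Dv(t+h^{2+2α}, x_{t∧}) − Dv(t, x)| ≤ 2C h^α + (1/h)|v(t+h^{2+2α}, x_{t∧} ⊕ h) − v(t+h^{2+2α}, x_{t∧}) − v(t, x ⊕_t h) + v(t, x)|, where Dv denotes a spatial difference-quotient derivative. If additionally v is (1/2)-Hölder in time with constant C' (i.e. |v(t',x_{t∧}) − v(t,x)| ≤ C'|t'−t|^{1/2}(1+‖x‖)) and Lipschitz in the bumped path, then |Dv(t+h^{2+2α}, x_{t∧}) − Dv(t, x)| ≤ C'' h^α (1+‖x‖) for a constant C'' depending only on C, C'. In particular, Hölder-in-space regularity of order α of the gradient plus 1/2-Hölder time regularity of v yields time regularity of the gradient of order α/(2+2α). -/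

import Mathlib

/-- interpolation trick. If `v : [0,T] × ℝ → ℝ` (here stated for all of
`ℝ × ℝ`) has a spatial derivative `dv` that is `α`-Hölder in space with constant `C`,
and `v` is `1/2`-Hölder in time with constant `C'`, then the spatial derivative is
`α/(2+2α)`-Hölder in time, with a constant `C''` depending only on `C`, `C'` (and `α`). -/
theorem stmt19 (αe C C' : ℝ) (hα : αe ∈ Set.Ioc (0 : ℝ) 1) (hC : 0 ≤ C) (hC' : 0 ≤ C') :
    ∃ C'' : ℝ, 0 < C'' ∧
      ∀ v dv : ℝ → ℝ → ℝ,
        (∀ t x, HasDerivAt (fun y => v t y) (dv t x) x) →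
        (∀ t x y, |dv t x - dv t y| ≤ C * |x - y| ^ αe) →
        (∀ t s x, |v t x - v s x| ≤ C' * Real.sqrt |t - s|) →
        ∀ t s x, |dv t x - dv s x| ≤ C'' * |t - s| ^ (αe / (2 + 2 * αe)) := by
  obtain ⟨hα0, hα1⟩ := hα
  have hd : (0:ℝ) < 2 + 2 * αe := by linarith
  refine ⟨2*C + 2*C' + 1, by positivity, ?_⟩
  intro v dv hderiv hspace htime t s x
  rcases eq_or_ne t s with rfl | hts
  · have : |t - t| = 0 := by simp
    rw [this, Real.zero_rpow (by positivity : αe / (2 + 2*αe) ≠ 0)]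
    simp
  · set δ := |t - s| with hδdef
    have hδ : 0 < δ := abs_pos.2 (sub_ne_zero.2 hts)
    set b := δ ^ ((1:ℝ)/(2+2*αe)) with hb
    have hbpos : 0 < b := Real.rpow_pos_of_pos hδ _
    -- difference quotient approximates derivative
    have key : ∀ u : ℝ, |dv u x - (v u (x+b) - v u x)/b| ≤ C * b ^ αe := by
      intro u
      obtain ⟨ξ, hξ, hξeq⟩ := exists_hasDerivAt_eq_slope (fun y => v u y) (dv u)
        (by linarith : x < x + b)
        (fun y _ => (hderiv u y).continuousAt.continuousWithinAt)
        (fun y _ => hderiv u y)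
      have hq : (v u (x+b) - v u x)/b = dv u ξ := by
        rw [hξeq]; congr 1; ring
      rw [hq]
      calc |dv u x - dv u ξ| ≤ C * |x - ξ| ^ αe := hspace u x ξ
        _ ≤ C * b ^ αe := by
            apply mul_le_mul_of_nonneg_left _ hC
            apply Real.rpow_le_rpow (abs_nonneg _) _ (le_of_lt hα0)
            rw [abs_sub_comm, abs_of_pos (by linarith [hξ.1] : (0:ℝ) < ξ - x)]
            linarith [hξ.2]
    have hSt := key t
    have hSs := key s
    have hmid : |(v t (x+b) - v t x)/b - (v s (x+b) - v s x)/b| ≤ 2 * C' * Real.sqrt δ / b := by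
      rw [div_sub_div_same, abs_div, abs_of_pos hbpos, div_le_div_iff_of_pos_right hbpos]
      calc |v t (x+b) - v t x - (v s (x+b) - v s x)|
          ≤ |v t (x+b) - v s (x+b)| + |v t x - v s x| := by
            have he : v t (x+b) - v t x - (v s (x+b) - v s x)
                = (v t (x+b) - v s (x+b)) - (v t x - v s x) := by ring
            rw [he]; exact abs_sub _ _
        _ ≤ C' * Real.sqrt δ + C' * Real.sqrt δ := add_le_add (htime t s (x+b)) (htime t s x)
        _ = 2 * C' * Real.sqrt δ := by ring
    -- exponent computations
    have hbα : b ^ αe = δ ^ (αe / (2 + 2*αe)) := by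
      rw [hb, ← Real.rpow_mul hδ.le]
      congr 1; ring
    have hsq : Real.sqrt δ / b = δ ^ (αe / (2 + 2*αe)) := by
      rw [Real.sqrt_eq_rpow, hb, ← Real.rpow_sub hδ]
      congr 1
      field_simp
      ring
    calc |dv t x - dv s x|
        ≤ |dv t x - (v t (x+b) - v t x)/b| + (|(v t (x+b) - v t x)/b - (v s (x+b) - v s x)/b|
            + |(v s (x+b) - v s x)/b - dv s x|) := by
          refine (abs_sub_le _ ((v t (x+b) - v t x)/b) _).trans ?_
          gcongr
          exact abs_sub_le _ _ _
      _ ≤ C * b ^ αe + (2 * C' * Real.sqrt δ / b + C * b ^ αe) := by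
          gcongr
          rw [abs_sub_comm]; exact hSs
      _ = 2*C * (b ^ αe) + 2*C' * (Real.sqrt δ / b) := by field_simp; ring
      _ = (2*C + 2*C') * δ ^ (αe / (2 + 2*αe)) := by rw [hbα, hsq]; ring
      _ ≤ (2*C + 2*C' + 1) * δ ^ (αe / (2 + 2*αe)) := by
          have : (0:ℝ) ≤ δ ^ (αe / (2 + 2*αe)) := Real.rpow_nonneg hδ.le _
          nlinarith
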